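/- Inversion formula for the Bruggeman transform. Let ν ∈ ℂ and f ∈ F_η, define ψ(z) := f(z) - z^{-2ν-1} η(S) f(-1/z) for z ∈ ℂ∖ℝ, and assume ψ extends holomorphically to ℂ∖(-∞,0]. Then, with all powers taken with the principal branch: ψ(z) + z^{-2ν-1} η(S) ψ(-1/z) = (1 + e^{-2πiν}) f(z) for every z with Im z > 0, and ψ(z) + z^{-2ν-1} η(S) ψ(-1/z) = (1 + e^{2πiν}) f(z) for every z with Im z < 0. In particular, if ν ∈ ½+ℤ then ψ(z) + z^{-2ν-1} η(S) ψ(-1/z) = 0 identically on ℂ∖ℝ, while if ν ∉ ½+ℤ then f is recovered from ψ by f(z) = (1+e^{∓2πiν})^{-1}(ψ(z) + z^{-2ν-1} η(S) ψ(-1/z)) for z in the upper (resp. lower) half-plane. -/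

import Mathlib

open Complex Filter Topology MeasureTheory Set

noncomputable section

abbrev SL2Z := Matrix.SpecialLinearGroup (Fin 2) ℤ

def Smat : SL2Z := ⟨!![0, 1; -1, 0], by decide⟩
def Tmat : SL2Z := ⟨!![1, 1; 0, 1], by decide⟩
def negI : SL2Z := ⟨!![-1, 0; 0, -1], by decide⟩

variable {V : Type} [NormedAddCommGroup V] [NormedSpace ℂ V]

/-- The space `F_η`. -/
structure MemFeta (η : SL2Z →* (V →ₗ[ℂ] V)ˣ) (f : ℂ → V) : Prop where
  holo : DifferentiableOn ℂ f {z : ℂ | z.im ≠ 0}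
  periodic : ∀ z : ℂ, z.im ≠ 0 → f (z + 1) = (η Tmat : V →ₗ[ℂ] V) (f z)
  bounded : ∃ C : ℝ, ∀ z : ℂ, 1 ≤ |z.im| → ‖f z‖ ≤ C
  limits : ∃ a b : V, Tendsto (fun t : ℝ => f ((t : ℂ) * I)) atTop (𝓝 a) ∧
    Tendsto (fun t : ℝ => f (-((t : ℂ) * I))) atTop (𝓝 b) ∧ a + b = 0

/-- `ψ(z) + z^{-2ν-1} η(S) ψ(-1/z)`. -/
def lewisCombo (ν : ℂ) (η : SL2Z →* (V →ₗ[ℂ] V)ˣ) (ψ : ℂ → V) : ℂ → V :=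
  fun z => ψ z + (z ^ (-2 * ν - 1)) • (η Smat : V →ₗ[ℂ] V) (ψ (-z⁻¹))

lemma Smat_sq : Smat * Smat = negI := by
  ext i j
  fin_cases i <;> fin_cases j <;> rfl

lemma log_add_log_pos {z : ℂ} (hz : 0 < z.im) :
    Complex.log z + Complex.log (-z⁻¹) = Real.pi * I := by
  have hz0 : z ≠ 0 := fun h => by simp [h] at hz
  have hinvim : (z⁻¹).im < 0 := by
    rw [Complex.inv_im]
    exact div_neg_of_neg_of_pos (neg_neg_iff_pos.2 hz) (Complex.normSq_pos.2 hz0)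
  have hargz : Complex.arg z ≠ Real.pi := by
    intro h
    have := Complex.arg_eq_pi_iff.1 h
    exact absurd this.2 hz.ne'
  have harg : Complex.arg (-z⁻¹) = Real.pi - Complex.arg z := by
    rw [Complex.arg_neg_eq_arg_add_pi_of_im_neg hinvim, Complex.arg_inv, if_neg hargz]
    ring
  rw [Complex.log, Complex.log, harg]
  have habs : ‖-z⁻¹‖ = ‖z‖⁻¹ := by simp
  rw [habs, Real.log_inv]
  push_cast
  ring

lemma log_add_log_neg {z : ℂ} (hz : z.im < 0) :
    Complex.log z + Complex.log (-z⁻¹) = -(Real.pi * I) := by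
  have hz0 : z ≠ 0 := fun h => by simp [h] at hz
  have hinvim : 0 < (z⁻¹).im := by
    rw [Complex.inv_im]
    exact div_pos (by linarith) (Complex.normSq_pos.2 hz0)
  have hargz : Complex.arg z ≠ Real.pi := by
    intro h
    have := Complex.arg_eq_pi_iff.1 h
    exact absurd this.2 hz.ne
  have hargzinv : Complex.arg z⁻¹ ≠ Real.pi := by
    intro h
    have := Complex.arg_eq_pi_iff.1 h
    exact absurd this.2 hinvim.ne'
  have harg : Complex.arg (-z⁻¹) = -Real.pi - Complex.arg z := by
    rw [Complex.arg_neg_eq_arg_sub_pi_of_im_pos hinvim, Complex.arg_inv, if_neg hargz]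
    ring
  rw [Complex.log, Complex.log, harg]
  have habs : ‖-z⁻¹‖ = ‖z‖⁻¹ := by simp
  rw [habs, Real.log_inv]
  push_cast
  ring

lemma cpow_mul_cpow {z : ℂ} (hz : z.im ≠ 0) (a : ℂ) :
    z ^ a * (-z⁻¹) ^ a = Complex.exp ((Complex.log z + Complex.log (-z⁻¹)) * a) := by
  have hz0 : z ≠ 0 := fun h => by simp [h] at hz
  have hz0' : -z⁻¹ ≠ 0 := by simp [hz0]
  rw [Complex.cpow_def_of_ne_zero hz0, Complex.cpow_def_of_ne_zero hz0',
    ← Complex.exp_add]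
  ring_nf

lemma exp_ne_neg_one_of_not_half (ν : ℂ) (hν : ∀ n : ℤ, ν ≠ 1 / 2 + n) (ε : ℂ)
    (hε : ε = 1 ∨ ε = -1) : 1 + Complex.exp (ε * (2 * Real.pi * I * ν)) ≠ 0 := by
  intro h
  have h1 : Complex.exp (ε * (2 * Real.pi * I * ν)) = -1 := by linear_combination h
  have h2 : Complex.exp (ε * (2 * Real.pi * I * ν) + Real.pi * I) = 1 := by
    rw [Complex.exp_add, h1, Complex.exp_pi_mul_I]; ring
  obtain ⟨n, hn⟩ := Complex.exp_eq_one_iff.1 h2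
  have hπ : (Real.pi : ℂ) ≠ 0 := by
    exact_mod_cast Real.pi_ne_zero
  have hπI : (Real.pi : ℂ) * I ≠ 0 := mul_ne_zero hπ Complex.I_ne_zero
  rcases hε with rfl | rfl
  · apply hν (n - 1)
    have key : (2 * ν + 1) * ((Real.pi : ℂ) * I) = (2 * n) * ((Real.pi : ℂ) * I) := by
      linear_combination hn
    have h3 : (2 : ℂ) * ν + 1 = 2 * n := mul_right_cancel₀ hπI key
    push_cast
    linear_combination h3 / 2
  · apply hν (-n)
    have key : (-(2 * ν) + 1) * ((Real.pi : ℂ) * I) = (2 * n) * ((Real.pi : ℂ) * I) := by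
      linear_combination hn
    have h3 : -((2 : ℂ) * ν) + 1 = 2 * n := mul_right_cancel₀ hπI key
    push_cast
    linear_combination -h3 / 2

/-- **Inversion formula for the Bruggeman transform** (formula (19) of the paper):
with `ψ(z) = f(z) - z^{-2ν-1} η(S) f(-1/z)` extended to the slit plane, one has
`ψ(z) + z^{-2ν-1} η(S) ψ(-1/z) = (1 + e^{∓2πiν}) f(z)` on `ℍ^±`; in particular for
`ν ∈ ½+ℤ` this combination vanishes, and for `ν ∉ ½+ℤ` it recovers `f` from `ψ`. -/
theorem bruggeman_inversion [FiniteDimensional ℂ V] [Nontrivial V]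
    (η : SL2Z →* (V →ₗ[ℂ] V)ˣ) (hη1 : η negI = 1) (hηfin : (Set.range η).Finite)
    (ν : ℂ) (f : ℂ → V) (hf : MemFeta η f)
    (ψ : ℂ → V) (hψholo : DifferentiableOn ℂ ψ Complex.slitPlane)
    (hψeq : ∀ z : ℂ, z.im ≠ 0 →
      ψ z = f z - (z ^ (-2 * ν - 1)) • (η Smat : V →ₗ[ℂ] V) (f (-z⁻¹))) :
    (∀ z : ℂ, 0 < z.im →
        lewisCombo ν η ψ z = (1 + Complex.exp (-(2 * Real.pi * I * ν))) • f z) ∧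
    (∀ z : ℂ, z.im < 0 →
        lewisCombo ν η ψ z = (1 + Complex.exp (2 * Real.pi * I * ν)) • f z) ∧
    ((∃ n : ℤ, ν = 1 / 2 + n) → ∀ z : ℂ, z.im ≠ 0 → lewisCombo ν η ψ z = 0) ∧
    ((∀ n : ℤ, ν ≠ 1 / 2 + n) →
      (∀ z : ℂ, 0 < z.im →
        f z = (1 + Complex.exp (-(2 * Real.pi * I * ν)))⁻¹ • lewisCombo ν η ψ z) ∧
      (∀ z : ℂ, z.im < 0 →
        f z = (1 + Complex.exp (2 * Real.pi * I * ν))⁻¹ • lewisCombo ν η ψ z)) := by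
  have hSS : ∀ v : V, (η Smat : V →ₗ[ℂ] V) ((η Smat : V →ₗ[ℂ] V) v) = v := by
    intro v
    have h : η Smat * η Smat = 1 := by rw [← map_mul, Smat_sq, hη1]
    have := congrArg (fun u : (V →ₗ[ℂ] V)ˣ => (u : V →ₗ[ℂ] V) v) h
    simpa [Module.End.mul_apply] using this
  -- the core algebraic identity
  have key : ∀ z : ℂ, z.im ≠ 0 →
      lewisCombo ν η ψ z = (1 - z ^ (-2 * ν - 1) * (-z⁻¹) ^ (-2 * ν - 1)) • f z := by
    intro z hz
    have hz0 : z ≠ 0 := fun h => hz (by simp [h])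
    have him : (-z⁻¹).im ≠ 0 := by
      simp only [Complex.neg_im, Complex.inv_im, neg_div, neg_neg]
      exact div_ne_zero hz ((Complex.normSq_pos.2 hz0).ne')
    have hback : -(-z⁻¹)⁻¹ = z := by field_simp
    unfold lewisCombo
    rw [hψeq z hz, hψeq (-z⁻¹) him, hback, map_sub, LinearMap.map_smul, hSS]
    module
  have hpos : ∀ z : ℂ, 0 < z.im →
      lewisCombo ν η ψ z = (1 + Complex.exp (-(2 * Real.pi * I * ν))) • f z := by
    intro z hz
    rw [key z hz.ne']
    congr 1
    rw [cpow_mul_cpow hz.ne' _, log_add_log_pos hz]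
    rw [show ((Real.pi : ℂ) * I) * (-2 * ν - 1) = -(2 * Real.pi * I * ν) + -(Real.pi * I)
      by ring, Complex.exp_add, Complex.exp_neg (Real.pi * I), Complex.exp_pi_mul_I]
    norm_num
  have hneg : ∀ z : ℂ, z.im < 0 →
      lewisCombo ν η ψ z = (1 + Complex.exp (2 * Real.pi * I * ν)) • f z := by
    intro z hz
    rw [key z hz.ne]
    congr 1
    rw [cpow_mul_cpow hz.ne _, log_add_log_neg hz]
    rw [show (-((Real.pi : ℂ) * I)) * (-2 * ν - 1) = 2 * Real.pi * I * ν + Real.pi * I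
      by ring, Complex.exp_add, Complex.exp_pi_mul_I]
    ring
  refine ⟨hpos, hneg, ?_, ?_⟩
  · rintro ⟨n, rfl⟩ z hz
    rcases hz.lt_or_gt with h | h
    · rw [hneg z h, show (2 : ℂ) * Real.pi * I * (1 / 2 + n) =
        Real.pi * I + n * (2 * Real.pi * I) by ring, Complex.exp_add,
        Complex.exp_pi_mul_I, Complex.exp_int_mul_two_pi_mul_I]
      norm_num
    · rw [hpos z h, show -((2 : ℂ) * Real.pi * I * (1 / 2 + n)) =
        -(Real.pi * I) + (-n : ℤ) * (2 * Real.pi * I) by push_cast; ring,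
        Complex.exp_add, Complex.exp_int_mul_two_pi_mul_I,
        Complex.exp_neg (Real.pi * I), Complex.exp_pi_mul_I]
      norm_num
  · intro hν
    constructor
    · intro z hz
      have hne : 1 + Complex.exp (-(2 * Real.pi * I * ν)) ≠ 0 := by
        have := exp_ne_neg_one_of_not_half ν hν (-1) (Or.inr rfl)
        rwa [show (-1 : ℂ) * (2 * Real.pi * I * ν) = -(2 * Real.pi * I * ν) by ring]
          at this
      rw [hpos z hz, smul_smul, inv_mul_cancel₀ hne, one_smul]
    · intro z hz
      have hne : 1 + Complex.exp (2 * Real.pi * I * ν) ≠ 0 := by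
        have := exp_ne_neg_one_of_not_half ν hν 1 (Or.inl rfl)
        rwa [one_mul] at this
      rw [hneg z hz, smul_smul, inv_mul_cancel₀ hne, one_smul]

end
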